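/- arXiv:0906.1317 — 12 statements merged into one kernel-verified Lean document; each statement's English description precedes it below -/
import Mathlib

section
/- For every positive integer n, the sum over k from 0 to n-1 of binomial(n, k+1) * (2k-1)!! * (2n-2k-3)!! equals (2n-1)!!, where (-1)!! = 1 and (-3)!! = -1. -/
open Nat Finset

private def aa : ℕ → ℤ
  | 0 => -1
  | (j+1) => ((2*j-1)‼ : ℤ)

private lemma aa_rec (j : ℕ) : aa (j+1) = (2*(j:ℤ)-1) * aa j := by
  match j with
  | 0 => simp [aa]
  | 1 => simp [aa, Nat.doubleFactorial]
  | (m+2) =>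
    show ((2*(m+2)-1)‼ : ℤ) = _ * ((2*(m+1)-1)‼ : ℤ)
    rw [show 2*(m+2)-1 = (2*(m+1)-1) + 2 from by omega, Nat.doubleFactorial_add_two,
      Nat.cast_mul, show ((2*(m+1)-1+2 : ℕ) : ℤ) = 2*((m:ℤ)+2)-1 from by omega]
    push_cast; ring

private def ff (n : ℕ) : ℤ := ∑ j ∈ Finset.range (n+1), (n.choose j : ℤ) * aa j * aa (n+1-j)

private lemma ff_succ (n : ℕ) : ff (n+1) = 2*n * ff n := by
  have hQ : ∑ j ∈ Finset.range (n+2), (n.choose j : ℤ) * aa j * aa (n+2-j)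
      = ∑ j ∈ Finset.range (n+1), (n.choose j : ℤ) * aa j * aa (n+2-j) := by
    rw [Finset.sum_range_succ, Nat.choose_succ_self]; push_cast; ring
  have hQ' : ∑ j ∈ Finset.range (n+2), (n.choose j : ℤ) * aa j * aa (n+2-j)
      = (∑ i ∈ Finset.range (n+1), (n.choose (i+1) : ℤ) * aa (i+1) * aa (n+1-i))
        + ((n+1).choose 0 : ℤ) * aa 0 * aa (n+1+1-0) := by
    rw [Finset.sum_range_succ']
    congr 1
    · exact Finset.sum_congr rfl fun i hi => by congr 2; omega
    · norm_num
  have step1 : ff (n+1)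
      = ∑ i ∈ Finset.range (n+1),
          (n.choose i : ℤ) * (aa (i+1) * aa (n+1-i) + aa i * aa (n+2-i)) := by
    unfold ff
    rw [Finset.sum_range_succ']
    have hP : ∀ i ∈ Finset.range (n+1),
        ((n+1).choose (i+1) : ℤ) * aa (i+1) * aa (n+1+1-(i+1))
        = (n.choose i : ℤ) * aa (i+1) * aa (n+1-i)
          + (n.choose (i+1) : ℤ) * aa (i+1) * aa (n+1-i) := by
      intro i hi
      rw [Nat.choose_succ_succ, show n+1+1-(i+1) = n+1-i from by omega]
      push_cast; ring
    rw [Finset.sum_congr rfl hP, Finset.sum_add_distrib, add_assoc, ← hQ', hQ,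
      ← Finset.sum_add_distrib]
    exact Finset.sum_congr rfl fun i hi => by ring
  rw [step1]
  unfold ff
  rw [Finset.mul_sum]
  apply Finset.sum_congr rfl
  intro i hi
  simp only [Finset.mem_range] at hi
  rw [show n+2-i = (n+1-i)+1 from by omega, aa_rec, aa_rec,
    show ((n+1-i : ℕ) : ℤ) = (n:ℤ)+1-i from by omega]
  ring

private lemma ff_eq_zero (n : ℕ) (hn : 0 < n) : ff n = 0 := by
  induction n with
  | zero => omega
  | succ m ih =>
    rcases Nat.eq_zero_or_pos m with h | h
    · subst h
      simp [ff, Finset.sum_range_succ, aa, Nat.doubleFactorial]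
    · rw [ff_succ, ih h, mul_zero]

theorem stmt0 (n : ℕ) (hn : 0 < n) :
    ∑ k ∈ Finset.range n, n.choose (k+1) * (2*k-1)‼ * (2*n-2*k-3)‼ = (2*n-1)‼ := by
  have key : ff n = 0 := ff_eq_zero n hn
  unfold ff at key
  rw [Finset.sum_range_succ'] at key
  have hterm : ∀ k ∈ Finset.range n,
      (n.choose (k+1) : ℤ) * aa (k+1) * aa (n+1-(k+1))
      = ((n.choose (k+1) * (2*k-1)‼ * (2*n-2*k-3)‼ : ℕ) : ℤ) := by
    intro k hk
    simp only [Finset.mem_range] at hk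
    rw [show n+1-(k+1) = (n-1-k)+1 from by omega]
    show (n.choose (k+1) : ℤ) * ((2*k-1)‼ : ℤ) * ((2*(n-1-k)-1)‼ : ℤ) = _
    rw [show 2*(n-1-k)-1 = 2*n-2*k-3 from by omega]
    push_cast; ring
  rw [Finset.sum_congr rfl hterm] at key
  have h0 : (n.choose 0 : ℤ) * aa 0 * aa (n+1-0) = -((2*n-1)‼ : ℤ) := by
    show (n.choose 0 : ℤ) * (-1) * ((2*n-1)‼ : ℤ) = _
    simp
  rw [h0] at key
  have : ((∑ k ∈ Finset.range n, n.choose (k+1) * (2*k-1)‼ * (2*n-2*k-3)‼ : ℕ) : ℤ)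
      = (((2*n-1)‼ : ℕ) : ℤ) := by
    rw [Nat.cast_sum]
    linarith [key]
  exact_mod_cast this
end

section
/- For every positive integer n, the sum over k from 1 to n of ((n-1)!/(k-1)!) * k * (2k-3)!! equals (2n-1)!!, where (-1)!! = 1. -/
open Nat Finset

theorem stmt1 (n : ℕ) (hn : 0 < n) :
    ∑ k ∈ Finset.Icc 1 n, (n-1)! / (k-1)! * k * (2*k-3)‼ = (2*n-1)‼ := by
  induction n with
  | zero => omega
  | succ n ih =>
    rcases Nat.eq_zero_or_pos n with h | h
    · subst h; decide
    · have ihn := ih h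
      rw [Finset.sum_Icc_succ_top (by omega : 1 ≤ n + 1)]
      have hsum : ∑ k ∈ Finset.Icc 1 n, (n + 1 - 1)! / (k-1)! * k * (2*k-3)‼
          = n * ∑ k ∈ Finset.Icc 1 n, (n-1)! / (k-1)! * k * (2*k-3)‼ := by
        rw [Finset.mul_sum]
        apply Finset.sum_congr rfl
        intro k hk
        simp only [Finset.mem_Icc] at hk
        have hdvd : (k-1)! ∣ (n-1)! := Nat.factorial_dvd_factorial (by omega)
        have hfac : (n + 1 - 1)! = n * (n-1)! := by
          conv_lhs => rw [show n + 1 - 1 = (n-1)+1 from by omega]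
          rw [Nat.factorial_succ]
          congr 1
          omega
        rw [hfac, Nat.mul_div_assoc _ hdvd]
        ring
      rw [hsum, ihn]
      have h1 : (n + 1 - 1)! / (n + 1 - 1)! = 1 := Nat.div_self (Nat.factorial_pos _)
      rw [h1]
      have h2 : 2 * (n + 1) - 3 = 2 * n - 1 := by omega
      rw [h2, one_mul]
      have h3 : 2 * (n + 1) - 1 = (2 * n - 1) + 2 := by omega
      rw [h3, Nat.doubleFactorial_add_two]
      have h4 : 2 * n - 1 + 2 = n + (n + 1) := by omega
      rw [h4]
      ring
end

section
/- For every nonnegative integer n, the sum over k from 0 to floor(n/2) of binomial(n, 2k) * binomial(2k, k) * n! / 2^(2k) equals (2n-1)!!. -/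
open Nat Finset Polynomial

lemma coeffm (m : ℕ) : (((1 + X^2 : ℕ[X]))^m).coeff m
    = if 2 ∣ m then m.choose (m/2) else 0 := by
  have h : ((1 + X^2 : ℕ[X]))^m = expand ℕ 2 ((1+X)^m) := by
    rw [map_pow, map_add, map_one, expand_X]
  rw [h, coeff_expand (by norm_num)]
  split_ifs with hd
  · rw [coeff_one_add_X_pow]; simp
  · rfl

lemma lemA (n : ℕ) :
    ∑ k ∈ Finset.range (n/2 + 1), n.choose (2*k) * (2*k).choose k * 2^(n - 2*k)
      = (2*n).choose n := by
  classical
  have key : ((1 + X : ℕ[X]))^(2*n) = ∑ j ∈ Finset.range (n+1),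
      (2 * X : ℕ[X])^j * (1 + X^2)^(n-j) * ((n.choose j : ℕ) : ℕ[X]) := by
    rw [pow_mul]
    have h2 : ((1+X:ℕ[X]))^2 = 2 * X + (1 + X^2) := by ring
    rw [h2, add_pow]
  have hco : (((1 + X : ℕ[X]))^(2*n)).coeff n = (2*n).choose n := by
    rw [coeff_one_add_X_pow]; simp
  rw [key, finset_sum_coeff] at hco
  have hterm : ∀ j ∈ Finset.range (n+1),
      ((2 * X : ℕ[X])^j * (1 + X^2)^(n-j) * ((n.choose j : ℕ) : ℕ[X])).coeff n
        = if 2 ∣ (n-j) then 2^j * (n-j).choose ((n-j)/2) * n.choose j else 0 := by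
    intro j hj
    simp only [Finset.mem_range, Nat.lt_succ_iff] at hj
    have e1 : (2 * X : ℕ[X])^j * (1 + X^2)^(n-j) * ((n.choose j : ℕ) : ℕ[X])
        = ((2^j : ℕ) : ℕ[X]) * (X^j * (1+X^2)^(n-j)) * ((n.choose j : ℕ) : ℕ[X]) := by
      push_cast; ring
    rw [e1, coeff_mul_natCast, coeff_natCast_mul, coeff_X_pow_mul', if_pos hj, coeffm]
    split_ifs with hd
    · push_cast; ring
    · simp
  rw [Finset.sum_congr rfl hterm, ← Finset.sum_filter] at hco
  rw [← hco]
  apply Finset.sum_nbij' (i := fun k => n - 2*k) (j := fun j => (n-j)/2)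
  · intro k hk
    simp only [Finset.mem_range, Nat.lt_succ_iff] at hk
    have : 2*k ≤ n := by omega
    simp only [Finset.mem_filter, Finset.mem_range]
    omega
  · intro j hj
    simp only [Finset.mem_filter, Finset.mem_range] at hj
    simp only [Finset.mem_range]
    omega
  · intro k hk
    simp only [Finset.mem_range, Nat.lt_succ_iff] at hk
    omega
  · intro j hj
    simp only [Finset.mem_filter, Finset.mem_range] at hj
    omega
  · intro k hk
    simp only [Finset.mem_range, Nat.lt_succ_iff] at hk
    have h1 : 2*k ≤ n := by omega
    have h2 : n - (n - 2*k) = 2*k := by omega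
    rw [h2, Nat.choose_symm h1]
    have h3 : 2*k/2 = k := by omega
    rw [h3]
    ring

lemma factTwo (k : ℕ) : (2*k)! = 2^k * k ! * (2*k-1)‼ := by
  cases k with
  | zero => simp [Nat.doubleFactorial]
  | succ m =>
    have h1 := Nat.factorial_eq_mul_doubleFactorial (2*(m+1)-1)
    have h2 : 2*(m+1)-1+1 = 2*(m+1) := by omega
    rw [h2] at h1
    rw [h1, Nat.doubleFactorial_two_mul]

lemma centralFact (k : ℕ) : (2*k).choose k * (2*k)! = 2^(2*k) * ((2*k-1)‼)^2 := by
  have hpos : 0 < k ! * k ! := Nat.mul_pos k.factorial_pos k.factorial_pos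
  apply Nat.eq_of_mul_eq_mul_right hpos
  have hc : (2*k).choose k * k ! * ((2*k) - k)! = (2*k)! :=
    Nat.choose_mul_factorial_mul_factorial (by omega)
  have hk : 2*k - k = k := by omega
  rw [hk] at hc
  calc (2*k).choose k * (2*k)! * (k ! * k !)
      = ((2*k).choose k * k ! * k !) * (2*k)! := by ring
    _ = (2*k)! * (2*k)! := by rw [hc]
    _ = (2^k * k ! * (2*k-1)‼) * (2^k * k ! * (2*k-1)‼) := by rw [factTwo]
    _ = 2^(2*k) * ((2*k-1)‼)^2 * (k ! * k !) := by ring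

lemma lemT (n k : ℕ) (h : 2*k ≤ n) :
    n.choose (2*k) * (2*k).choose k * n !
      = 2^(2*k) * (n.choose (2*k)^2 * ((2*k-1)‼)^2 * (n-2*k)!) := by
  have hc : n.choose (2*k) * (2*k)! * (n - 2*k)! = n ! :=
    Nat.choose_mul_factorial_mul_factorial h
  calc n.choose (2*k) * (2*k).choose k * n !
      = n.choose (2*k) * (2*k).choose k * (n.choose (2*k) * (2*k)! * (n - 2*k)!) := by
        rw [hc]
    _ = n.choose (2*k)^2 * (n-2*k)! * ((2*k).choose k * (2*k)!) := by ring
    _ = n.choose (2*k)^2 * (n-2*k)! * (2^(2*k) * ((2*k-1)‼)^2) := by rw [centralFact]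
    _ = _ := by ring

theorem stmt2 (n : ℕ) :
    ∑ k ∈ Finset.range (n/2 + 1), n.choose (2*k) * (2*k).choose k * n ! / 2^(2*k)
      = (2*n-1)‼ := by
  have hle : ∀ k ∈ Finset.range (n/2+1), 2*k ≤ n := by
    intro k hk
    simp only [Finset.mem_range, Nat.lt_succ_iff] at hk
    omega
  have step1 : ∑ k ∈ Finset.range (n/2 + 1), n.choose (2*k) * (2*k).choose k * n ! / 2^(2*k)
      = ∑ k ∈ Finset.range (n/2 + 1), n.choose (2*k)^2 * ((2*k-1)‼)^2 * (n-2*k)! := by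
    apply Finset.sum_congr rfl
    intro k hk
    rw [lemT n k (hle k hk)]
    exact Nat.mul_div_cancel_left _ (Nat.pow_pos (by norm_num))
  rw [step1]
  apply Nat.eq_of_mul_eq_mul_left (show 0 < 2^n from Nat.pow_pos (by norm_num))
  rw [Finset.mul_sum]
  have step2 : ∀ k ∈ Finset.range (n/2+1),
      2^n * (n.choose (2*k)^2 * ((2*k-1)‼)^2 * (n-2*k)!)
        = (n.choose (2*k) * (2*k).choose k * 2^(n-2*k)) * n ! := by
    intro k hk
    have h := hle k hk
    have hsplit : 2^n = 2^(n-2*k) * 2^(2*k) := by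
      rw [← pow_add]
      congr 1
      omega
    rw [hsplit, mul_assoc, ← lemT n k h]
    ring
  rw [Finset.sum_congr rfl step2, ← Finset.sum_mul, lemA]
  -- goal: (2*n).choose n * n ! = 2^n * (2*n-1)‼
  apply Nat.eq_of_mul_eq_mul_right n.factorial_pos
  have hc : (2*n).choose n * n ! * (2*n - n)! = (2*n)! :=
    Nat.choose_mul_factorial_mul_factorial (by omega)
  have hn : 2*n - n = n := by omega
  rw [hn] at hc
  calc (2*n).choose n * n ! * n ! = (2*n)! := hc
    _ = 2^n * n ! * (2*n-1)‼ := factTwo n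
    _ = 2^n * (2*n-1)‼ * n ! := by ring
end

section
/- For all nonnegative integers n and r with r ≤ n, the sum over k from r to floor((n+r)/2) of binomial(n, 2k-r) * binomial(2k-r, k) * 2^(n-2k+r) equals binomial(2n, n-r). -/
open Nat Finset
open Polynomial

-- coeff of (1 + X^2)^m
lemma aux_coeff (m t : ℕ) :
    ((1 + Polynomial.X ^ 2 : Polynomial ℕ) ^ m).coeff t
      = if t % 2 = 0 then m.choose (t / 2) else 0 := by
  rw [add_comm, add_pow]
  rw [finset_sum_coeff]
  have : ∀ a ∈ Finset.range (m + 1),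
      (((Polynomial.X:Polynomial ℕ) ^ 2) ^ a * 1 ^ (m - a) * (m.choose a : Polynomial ℕ)).coeff t
        = if t = 2 * a then m.choose a else 0 := by
    intro a _
    rw [one_pow, mul_one, ← pow_mul, ← Polynomial.C_eq_natCast, Polynomial.coeff_mul_C,
      Polynomial.coeff_X_pow]
    simp [eq_comm]
  rw [Finset.sum_congr rfl this]
  rcases Nat.even_or_odd t with he | ho
  · have h2 : t % 2 = 0 := Nat.even_iff.mp he
    rw [if_pos h2]
    have : ∀ a, (t = 2 * a) ↔ (a = t / 2) := by
      intro a; omega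
    simp_rw [this]
    rw [Finset.sum_ite_eq' (Finset.range (m+1)) (t/2) (fun a => m.choose a)]
    split_ifs with hm
    · rfl
    · simp only [Finset.mem_range, not_lt] at hm
      exact (Nat.choose_eq_zero_of_lt hm).symm
  · have h1 : t % 2 = 1 := Nat.odd_iff.mp ho
    rw [if_neg (by omega)]
    apply Finset.sum_eq_zero
    intro a _
    rw [if_neg (by omega)]

lemma stepB (n r : ℕ) (h : r ≤ n) :
    (2*n).choose (n-r)
      = ∑ m ∈ Finset.range (n+1),
          if r ≤ m ∧ (m - r) % 2 = 0
          then n.choose m * m.choose ((m-r)/2) * 2^(n-m) else 0 := by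
  have e1 : ((1 + Polynomial.X : Polynomial ℕ)^(2*n)).coeff (n-r) = (2*n).choose (n-r) := by
    simpa using Polynomial.coeff_one_add_X_pow ℕ (2*n) (n-r)
  have e2 : ((1 + Polynomial.X : Polynomial ℕ)^(2*n))
      = ((1 + Polynomial.X^2) + 2*Polynomial.X)^n := by
    rw [pow_mul]; ring
  rw [← e1, e2, add_pow, finset_sum_coeff]
  apply Finset.sum_congr rfl
  intro m hm
  have hmn : m ≤ n := by simpa [Nat.lt_succ_iff] using hm
  have key : ((1 + Polynomial.X^2 : Polynomial ℕ)^m * (2*Polynomial.X)^(n-m)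
        * ((n.choose m : ℕ) : Polynomial ℕ))
      = (n.choose m * 2^(n-m))
        • ((1 + Polynomial.X^2)^m * Polynomial.X^(n-m)) := by
    rw [nsmul_eq_mul, mul_pow]
    push_cast
    ring
  rw [key, Polynomial.coeff_smul, smul_eq_mul,
    mul_comm ((1 + Polynomial.X^2 : Polynomial ℕ)^m) _]
  rw [Polynomial.coeff_X_pow_mul', aux_coeff]
  have hsub : n - r - (n - m) = m - r := by omega
  rw [hsub]
  rcases le_or_gt r m with hrm | hrm
  · rw [if_pos (by omega)]
    by_cases hp : (m - r) % 2 = 0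
    · rw [if_pos hp, if_pos ⟨hrm, hp⟩]; ring
    · rw [if_neg hp, if_neg (by tauto)]; ring
  · rw [if_neg (by omega), if_neg (by omega)]; ring

theorem stmt3 (n r : ℕ) (h : r ≤ n) :
    ∑ k ∈ Finset.Icc r ((n+r)/2), n.choose (2*k-r) * (2*k-r).choose k * 2^(n+r-2*k)
      = (2*n).choose (n-r) := by
  rw [stepB n r h, ← Finset.sum_filter]
  apply Finset.sum_nbij' (i := fun k => 2*k - r) (j := fun m => (m+r)/2)
  · intro k hk
    simp only [Finset.mem_Icc] at hk
    simp only [Finset.mem_filter, Finset.mem_range]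
    omega
  · intro m hmem
    simp only [Finset.mem_filter, Finset.mem_range] at hmem
    simp only [Finset.mem_Icc]
    omega
  · intro k hk
    simp only [Finset.mem_Icc] at hk
    omega
  · intro m hmem
    simp only [Finset.mem_filter, Finset.mem_range] at hmem
    omega
  · intro k hk
    simp only [Finset.mem_Icc] at hk
    have h1 : 2*k - r - r = 2*(k - r) := by omega
    have h2 : (2*(k-r))/2 = k - r := by omega
    rw [h1, h2]
    have h3 : (2*k - r).choose (k - r) = (2*k - r).choose k := by
      have := Nat.choose_symm (n := 2*k - r) (k := k) (by omega)
      rwa [show 2*k - r - k = k - r by omega] at this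
    rw [h3, show n - (2*k - r) = n + r - 2*k by omega]
end

section
/- For every positive integer n, the sum over k from 1 to n of (2n-2)!! * (2k-3)!! / (2k-2)!! equals (2n-1)!!, where (-1)!! = 1 and (0)!! = 1. -/
open Nat Finset

lemma df_dvd (j m : ℕ) (h : j ≤ m) : (2*j)‼ ∣ (2*m)‼ := by
  rw [Nat.doubleFactorial_two_mul, Nat.doubleFactorial_two_mul]
  exact mul_dvd_mul (pow_dvd_pow 2 h) (Nat.factorial_dvd_factorial h)

lemma aux (m : ℕ) :
    ∑ k ∈ Finset.Icc 1 (m+1), (2*m)‼ * (2*k-3)‼ / (2*k-2)‼ = (2*m+1)‼ := by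
  induction m with
  | zero => decide
  | succ m ih =>
    rw [show m+1+1 = (m+1)+1 from rfl, Finset.sum_Icc_succ_top (by omega : 1 ≤ m+1+1)]
    have hlast : (2*(m+1))‼ * (2*(m+1+1)-3)‼ / (2*(m+1+1)-2)‼ = (2*m+1)‼ := by
      have h1 : 2*(m+1+1)-3 = 2*m+1 := by omega
      have h2 : 2*(m+1+1)-2 = 2*(m+1) := by omega
      rw [h1, h2, Nat.mul_div_cancel_left _ (Nat.doubleFactorial_pos _)]
    rw [hlast]
    have hsum : ∑ k ∈ Finset.Icc 1 (m+1), (2*(m+1))‼ * (2*k-3)‼ / (2*k-2)‼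
        = (2*m+2) * ∑ k ∈ Finset.Icc 1 (m+1), (2*m)‼ * (2*k-3)‼ / (2*k-2)‼ := by
      rw [Finset.mul_sum]
      apply Finset.sum_congr rfl
      intro k hk
      simp only [Finset.mem_Icc] at hk
      have hdvd : (2*k-2)‼ ∣ (2*m)‼ * (2*k-3)‼ := by
        apply Dvd.dvd.mul_right
        have : 2*k-2 = 2*(k-1) := by omega
        rw [this]
        exact df_dvd _ _ (by omega)
      have hdf : (2*(m+1))‼ = (2*m+2) * (2*m)‼ := by
        have : 2*(m+1) = 2*m+2 := by omega
        rw [this, Nat.doubleFactorial_add_two]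
      rw [hdf, mul_assoc, Nat.mul_div_assoc _ hdvd]
    rw [hsum, ih]
    have : 2*(m+1)+1 = (2*m+1)+2 := by omega
    rw [this, Nat.doubleFactorial_add_two]
    ring

theorem stmt4 (n : ℕ) (hn : 0 < n) :
    ∑ k ∈ Finset.Icc 1 n, (2*n-2)‼ * (2*k-3)‼ / (2*k-2)‼ = (2*n-1)‼ := by
  obtain ⟨m, rfl⟩ : ∃ m, n = m + 1 := ⟨n - 1, by omega⟩
  have h1 : 2*(m+1)-2 = 2*m := by omega
  have h2 : 2*(m+1)-1 = 2*m+1 := by omega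
  rw [h1, h2]
  exact aux m
end

section
/- For every positive integer n, (2n-2)!! + the sum over k from 2 to n of (2n-1)!! * (2k-4)!! / (2k-1)!! equals (2n-1)!!. -/
open Nat Finset

lemma dvd_dfact {k n : ℕ} (hk : 1 ≤ k) (h : k ≤ n) : (2*k-1)‼ ∣ (2*n-1)‼ := by
  induction n, h using Nat.le_induction with
  | base => rfl
  | succ m hm ih =>
    have h2 : 2*(m+1)-1 = (2*m-1)+2 := by omega
    rw [h2, Nat.doubleFactorial_add_two]
    exact ih.mul_left _

theorem stmt5 (n : ℕ) (hn : 0 < n) :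
    (2*n-2)‼ + ∑ k ∈ Finset.Icc 2 n, (2*n-1)‼ * (2*k-4)‼ / (2*k-1)‼ = (2*n-1)‼ := by
  induction n, hn using Nat.le_induction with
  | base => simp
  | succ m hm ih =>
    rw [Finset.sum_Icc_succ_top (by omega)]
    have h1 : 2*(m+1)-1 = (2*m-1)+2 := by omega
    have h2 : (2*m-1)+2 = 2*m+1 := by omega
    have hdf : (2*(m+1)-1)‼ = (2*m+1) * (2*m-1)‼ := by
      rw [h1, Nat.doubleFactorial_add_two, h2]
    have hterm : (2*(m+1)-1)‼ * (2*(m+1)-4)‼ / (2*(m+1)-1)‼ = (2*m-2)‼ := by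
      rw [show 2*(m+1)-4 = 2*m-2 from by omega,
        Nat.mul_div_cancel_left _ (Nat.doubleFactorial_pos _)]
    rw [hterm]
    have hsum : ∑ k ∈ Finset.Icc 2 m, (2*(m+1)-1)‼ * (2*k-4)‼ / (2*k-1)‼
        = (2*m+1) * ∑ k ∈ Finset.Icc 2 m, (2*m-1)‼ * (2*k-4)‼ / (2*k-1)‼ := by
      rw [Finset.mul_sum]
      apply Finset.sum_congr rfl
      intro k hk
      simp only [Finset.mem_Icc] at hk
      rw [hdf, mul_assoc, Nat.mul_div_assoc _ ((dvd_dfact (by omega) hk.2).mul_right _)]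
    rw [hsum, hdf]
    have h3 : (2*(m+1)-2)‼ = 2*m * (2*m-2)‼ := by
      have : 2*(m+1)-2 = (2*m-2)+2 := by omega
      rw [this, Nat.doubleFactorial_add_two]
      congr 1; omega
    rw [h3]
    set S := ∑ k ∈ Finset.Icc 2 m, (2*m-1)‼ * (2*k-4)‼ / (2*k-1)‼ with hS
    rw [← ih]
    ring
end

section
/- For every positive integer n, the sum over k from 1 to n of k! * binomial(2n-k-1, k-1) * (2n-2k-1)!! equals (2n-1)!!, where (-1)!! = 1 and the convention binomial(-1,-1) = 1 is used for the term k = n. -/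
open Nat Finset

private def Tt (n k : ℕ) : ℕ := k ! * (2*n-k-1).choose (k-1) * (2*n-2*k-1)‼

private lemma df1 (t : ℕ) : (2*t+1)‼ = (2*t+1) * (2*t-1)‼ := by
  cases t with
  | zero => simp [Nat.doubleFactorial]
  | succ s =>
    rw [show 2*(s+1)+1 = (2*s+1)+2 from by ring, Nat.doubleFactorial_add_two,
      show 2*(s+1)-1 = 2*s+1 from by omega]

private lemma aux_coeff_s7 (t j : ℕ) :
    (2*t+1) * (2*t+j+3).choose (j+1)
      = (2*t+j+2) * (2*t+j+1).choose (j+1) + (2*t+1) * (2*t+j+2).choose j := by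
  have hp : (2*t+j+3).choose (j+1) = (2*t+j+2).choose j + (2*t+j+2).choose (j+1) :=
    Nat.choose_succ_succ _ _
  have h1 : (2*t+j+2).choose (j+2) * (j+2) = (2*t+j+2).choose (j+1) * (2*t+1) := by
    have h := Nat.choose_succ_right_eq (2*t+j+2) (j+1)
    rwa [show 2*t+j+2-(j+1) = 2*t+1 from by omega] at h
  have h2 : (2*t+j+2) * (2*t+j+1).choose (j+1) = (2*t+j+2).choose (j+2) * (j+2) :=
    Nat.add_one_mul_choose_eq _ _
  rw [hp, h2, h1]; ring

private lemma Tt_top (n : ℕ) (hn : 1 ≤ n) : Tt n (n+1) = 0 := by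
  have h : (2*n-(n+1)-1).choose n = 0 :=
    Nat.choose_eq_zero_of_lt (by omega)
  simp [Tt, h]

private lemma key (n k : ℕ) (h1 : 1 ≤ k) (hk : k ≤ n) :
    Tt (n+1) (k+1) = (2*n-k-1) * Tt n (k+1) + (k+1) * Tt n k := by
  obtain ⟨j, rfl⟩ : ∃ j, k = j+1 := ⟨k-1, by omega⟩
  obtain ⟨m, rfl⟩ : ∃ m, n = (j+1)+m := ⟨n-(j+1), by omega⟩
  cases m with
  | zero =>
    simp only [Tt]
    rw [show 2*((j+1)+0+1)-(j+1+1)-1 = j+1 from by omega,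
        show (j+1+1)-1 = j+1 from by omega,
        show 2*((j+1)+0+1)-2*(j+1+1)-1 = 0 from by omega,
        show 2*((j+1)+0)-(j+1+1)-1 = j-1 from by omega,
        show 2*((j+1)+0)-2*(j+1+1)-1 = 0 from by omega,
        show 2*((j+1)+0)-(j+1)-1 = j from by omega,
        show (j+1)-1 = j from by omega,
        show 2*((j+1)+0)-2*(j+1)-1 = 0 from by omega]
    rw [Nat.choose_self, Nat.choose_eq_zero_of_lt (show j-1 < j+1 from by omega),
        Nat.choose_self, Nat.factorial_succ (j+1)]
    ring
  | succ t =>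
    simp only [Tt]
    rw [show 2*((j+1)+(t+1)+1)-(j+1+1)-1 = 2*t+j+3 from by omega,
        show (j+1+1)-1 = j+1 from by omega,
        show 2*((j+1)+(t+1)+1)-2*(j+1+1)-1 = 2*t+1 from by omega,
        show 2*((j+1)+(t+1))-(j+1+1)-1 = 2*t+j+1 from by omega,
        show 2*((j+1)+(t+1))-2*(j+1+1)-1 = 2*t-1 from by omega,
        show 2*((j+1)+(t+1))-(j+1)-1 = 2*t+j+2 from by omega,
        show (j+1)-1 = j from by omega,
        show 2*((j+1)+(t+1))-2*(j+1)-1 = 2*t+1 from by omega]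
    rw [df1 t, Nat.factorial_succ (j+1)]
    have h := aux_coeff_s7 t j
    zify at h ⊢
    linear_combination ((j : ℤ)+2) * ((j+1)! : ℤ) * (((2*t-1)‼ : ℕ) : ℤ) * h

private lemma main (n : ℕ) (hn : 1 ≤ n) :
    ∑ k ∈ Finset.range n, Tt n (k+1) = (2*n-1)‼ := by
  induction n with
  | zero => omega
  | succ n ih =>
    rcases Nat.eq_or_lt_of_le hn with h1 | h1
    · simp [← h1, Tt, Nat.doubleFactorial]
    have hn' : 1 ≤ n := by omega
    have ih := ih hn'
    have A : ∑ k ∈ Finset.range (n+1), Tt (n+1) (k+1)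
        = (∑ k ∈ Finset.range n, Tt (n+1) (k+1+1)) + Tt (n+1) (0+1) :=
      Finset.sum_range_succ' _ n
    have B : ∑ k ∈ Finset.range n, Tt (n+1) (k+1+1)
        = (∑ k ∈ Finset.range n, (2*n-(k+1)-1) * Tt n (k+1+1))
          + ∑ k ∈ Finset.range n, (k+1+1) * Tt n (k+1) := by
      rw [← Finset.sum_add_distrib]
      refine Finset.sum_congr rfl fun k hk => ?_
      exact key n (k+1) (by omega) (by simpa using Finset.mem_range.mp hk)
    have C : ∑ k ∈ Finset.range (n+1), (2*n-k-1) * Tt n (k+1)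
        = (∑ k ∈ Finset.range n, (2*n-(k+1)-1) * Tt n (k+1+1))
          + (2*n-0-1) * Tt n (0+1) :=
      Finset.sum_range_succ' _ n
    have D : ∑ k ∈ Finset.range (n+1), (2*n-k-1) * Tt n (k+1)
        = (∑ k ∈ Finset.range n, (2*n-k-1) * Tt n (k+1)) + (2*n-n-1) * Tt n (n+1) :=
      Finset.sum_range_succ _ n
    have hTtop : Tt n (n+1) = 0 := Tt_top n hn'
    have E : (∑ k ∈ Finset.range n, (2*n-k-1) * Tt n (k+1))
          + ∑ k ∈ Finset.range n, (k+1+1) * Tt n (k+1)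
        = (2*n+1) * (2*n-1)‼ := by
      rw [← Finset.sum_add_distrib, ← ih, Finset.mul_sum]
      refine Finset.sum_congr rfl fun k hk => ?_
      have hk' := Finset.mem_range.mp hk
      rw [← Nat.add_mul]
      congr 1
      omega
    have hF : Tt (n+1) (0+1) = (2*n-0-1) * Tt n (0+1) := by
      simp only [Tt]
      rw [show 2*(n+1)-(0+1)-1 = 2*n from by omega,
          show (0+1)-1 = 0 from rfl,
          show 2*(n+1)-2*(0+1)-1 = 2*n-1 from by omega,
          show 2*n-(0+1)-1 = 2*n-2 from by omega,
          show 2*n-2*(0+1)-1 = 2*n-3 from by omega]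
      have := df1 (n-1)
      rw [show 2*(n-1)+1 = 2*n-1 from by omega, show 2*(n-1)-1 = 2*n-3 from by omega] at this
      simp [this, Nat.choose_zero_right]
    have hG : (2*(n+1)-1)‼ = (2*n+1) * (2*n-1)‼ := by
      have := df1 n
      rwa [show 2*n+1 = 2*(n+1)-1 from by omega] at this
    rw [hTtop, Nat.mul_zero, Nat.add_zero] at D
    rw [A, B, hG, hF]
    omega

theorem stmt7 (n : ℕ) (hn : 0 < n) :
    ∑ k ∈ Finset.Icc 1 n, k ! * (2*n-k-1).choose (k-1) * (2*n-2*k-1)‼ = (2*n-1)‼ := by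
  have h : ∑ k ∈ Finset.Icc 1 n, k ! * (2*n-k-1).choose (k-1) * (2*n-2*k-1)‼
      = ∑ k ∈ Finset.range n, Tt n (k+1) := by
    rw [← Finset.Ico_add_one_right_eq_Icc, Finset.sum_Ico_eq_sum_range]
    simp only [Nat.add_sub_cancel]
    exact Finset.sum_congr rfl fun k _ => by simp only [Tt]; rw [Nat.add_comm 1 k]
  rw [h]
  exact main n hn
end

section
/- Let T = (x_{ij})_{1 ≤ i < j ≤ 2n} be an upper triangular array with constant rows, i.e. x_{ij} = x_i. Then the Hafnian Hf(T) = sum over perfect matching permutations (a,b) of the products x_{a(1)}···x_{a(n)} equals the sum over all increasing sequences a = (a(1),...,a(n)) with a(1) < a(2) < ··· < a(n) and 1 ≤ a(i) ≤ 2i-1, of the products ∏_{i=1}^n (2i - a(i)) x_{a(i)}. -/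
open Nat Finset

private lemma countInj {α : Type*} [Fintype α] [DecidableEq α] :
    ∀ (n : ℕ) (A : Fin n → Finset α), (∀ i j : Fin n, i ≤ j → A j ⊆ A i) →
    Fintype.card {b : Fin n → α // Function.Injective b ∧ ∀ i, b i ∈ A i}
      = ∏ i : Fin n, ((A i).card - (n - 1 - (i : ℕ)))
  | 0, A, _ => by
      rw [Fintype.card_eq_one_iff.2 ⟨⟨fun i => i.elim0, fun i => i.elim0, fun i => i.elim0⟩,
        fun b => Subtype.ext (funext fun i => i.elim0)⟩]
      simp
  | (n+1), A, hA => by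
      classical
      have E : {b : Fin (n+1) → α // Function.Injective b ∧ ∀ i, b i ∈ A i} ≃
          Σ v : {v // v ∈ A (Fin.last n)},
            {c : Fin n → α // Function.Injective c ∧ ∀ i, c i ∈ (A i.castSucc).erase v.1} :=
        { toFun := fun b => ⟨⟨b.1 (Fin.last n), b.2.2 _⟩,
            ⟨fun i => b.1 i.castSucc,
              fun i j h => Fin.castSucc_injective n (b.2.1 h),
              fun i => Finset.mem_erase.2
                ⟨fun h => absurd (b.2.1 h) (Fin.castSucc_lt_last i).ne, b.2.2 _⟩⟩⟩
          invFun := fun vc => ⟨Fin.snoc vc.2.1 vc.1.1, by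
            constructor
            · intro i j h
              induction i using Fin.lastCases with
              | last =>
                induction j using Fin.lastCases with
                | last => rfl
                | cast j =>
                  rw [Fin.snoc_last, Fin.snoc_castSucc] at h
                  exact absurd h.symm (Finset.ne_of_mem_erase (vc.2.2.2 j))
              | cast i =>
                induction j using Fin.lastCases with
                | last =>
                  rw [Fin.snoc_last, Fin.snoc_castSucc] at h
                  exact absurd h (Finset.ne_of_mem_erase (vc.2.2.2 i))
                | cast j =>
                  rw [Fin.snoc_castSucc, Fin.snoc_castSucc] at h
                  exact congrArg Fin.castSucc (vc.2.2.1 h)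
            · intro i
              induction i using Fin.lastCases with
              | last => rw [Fin.snoc_last]; exact vc.1.2
              | cast i =>
                rw [Fin.snoc_castSucc]
                exact Finset.mem_of_mem_erase (vc.2.2.2 i)⟩
          left_inv := fun b => Subtype.ext (funext fun i => by
            induction i using Fin.lastCases with
            | last => simp
            | cast i => simp)
          right_inv := fun vc => by
            refine Sigma.ext (Subtype.ext ?_) ((Subtype.heq_iff_coe_eq ?_).2 ?_)
            · simp
            · intro c
              simp
            · funext i
              simp }
      rw [Fintype.card_congr E, Fintype.card_sigma]
      have hcalc : ∀ v ∈ A (Fin.last n),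
          Fintype.card {c : Fin n → α // Function.Injective c ∧
              ∀ i, c i ∈ (A i.castSucc).erase v}
            = ∏ i : Fin n, ((A i.castSucc).card - (n - (i : ℕ))) := by
        intro v hv
        rw [countInj n _ (fun i j hij => Finset.erase_subset_erase _
          (hA i.castSucc j.castSucc (by simpa using hij)))]
        refine Finset.prod_congr rfl fun i _ => ?_
        rw [Finset.card_erase_of_mem (hA i.castSucc (Fin.last n) (Fin.le_last _) hv)]
        have : (i : ℕ) < n := i.isLt
        omega
      rw [Finset.sum_coe_sort (A (Fin.last n))
        (fun v => Fintype.card {c : Fin n → α // Function.Injective c ∧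
            ∀ i, c i ∈ (A i.castSucc).erase v}),
        Finset.sum_congr rfl hcalc, Finset.sum_const, Fin.prod_univ_castSucc]
      simp [mul_comm]

private lemma a_le (n : ℕ) (a b : Fin n → Fin (2*n)) (hab : ∀ i, a i < b i)
    (ha : StrictMono a) (hbij : Function.Bijective (Sum.elim a b)) (i : Fin n) :
    (a i : ℕ) ≤ 2 * (i : ℕ) := by
  classical
  have hsub : Finset.Iio (a i) ⊆
      (Finset.image a (Finset.Iio i)) ∪ (Finset.image b (Finset.Iio i)) := by
    intro v hv
    rw [Finset.mem_Iio] at hv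
    obtain ⟨s, hs⟩ := hbij.2 v
    rcases s with j | j
    · refine Finset.mem_union_left _ (Finset.mem_image.2 ⟨j, ?_, hs⟩)
      rw [Finset.mem_Iio]
      exact ha.lt_iff_lt.1 (by rw [show a j = v from hs]; exact hv)
    · refine Finset.mem_union_right _ (Finset.mem_image.2 ⟨j, ?_, hs⟩)
      rw [Finset.mem_Iio]
      have : a j < a i := lt_trans (hab j) (by rw [show b j = v from hs]; exact hv)
      exact ha.lt_iff_lt.1 this
  have := Finset.card_le_card hsub
  rw [Fin.card_Iio] at this
  calc (a i : ℕ) ≤ _ := this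
    _ ≤ (Finset.image a (Finset.Iio i)).card + (Finset.image b (Finset.Iio i)).card :=
        Finset.card_union_le _ _
    _ ≤ (Finset.Iio i).card + (Finset.Iio i).card :=
        Nat.add_le_add (Finset.card_image_le) (Finset.card_image_le)
    _ = 2 * (i : ℕ) := by rw [Fin.card_Iio]; ring

private lemma fiber_card (n : ℕ) (a : Fin n → Fin (2*n)) (ha : StrictMono a)
    (ha2 : ∀ i : Fin n, (a i : ℕ) ≤ 2*(i:ℕ)) :
    Fintype.card {b : Fin n → Fin (2*n) // (∀ i, a i < b i) ∧
        Function.Bijective (Sum.elim a b)}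
      = ∏ i : Fin n, (2*(i:ℕ) + 1 - (a i : ℕ)) := by
  classical
  set A : Fin n → Finset (Fin (2*n)) :=
    fun i => Finset.Ioi (a i) \ Finset.image a Finset.univ with hA
  have hmem : ∀ i v, v ∈ A i ↔ a i < v ∧ ∀ j, a j ≠ v := by
    intro i v
    simp [hA, Finset.mem_sdiff]
  have E : {b : Fin n → Fin (2*n) // (∀ i, a i < b i) ∧
      Function.Bijective (Sum.elim a b)} ≃
      {b : Fin n → Fin (2*n) // Function.Injective b ∧ ∀ i, b i ∈ A i} := by
    refine Equiv.subtypeEquiv (Equiv.refl _) fun b => ?_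
    simp only [Equiv.refl_apply]
    constructor
    · rintro ⟨hlt, hbij⟩
      refine ⟨fun i j h => ?_, fun i => (hmem i (b i)).2 ⟨hlt i, fun j hj => ?_⟩⟩
      · have : Sum.elim a b (Sum.inr i) = Sum.elim a b (Sum.inr j) := by simpa using h
        simpa using hbij.1 this
      · have : Sum.elim a b (Sum.inl j) = Sum.elim a b (Sum.inr i) := by simpa using hj
        simpa using hbij.1 this
    · rintro ⟨hinj, hm⟩
      have hlt : ∀ i, a i < b i := fun i => ((hmem i (b i)).1 (hm i)).1
      refine ⟨hlt, (Fintype.bijective_iff_injective_and_card _).2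
        ⟨Function.Injective.sumElim ha.injective hinj fun i j h => ?_, by simp [two_mul]⟩⟩
      exact ((hmem j (b j)).1 (hm j)).2 i h
  rw [Fintype.card_congr E, countInj n A ?_]
  · refine Finset.prod_congr rfl fun i _ => ?_
    have hAi : A i = Finset.Ioi (a i) \ Finset.image a (Finset.Ioi i) := by
      ext v
      simp only [hA, Finset.mem_sdiff, Finset.mem_Ioi, Finset.mem_image, Finset.mem_univ,
        true_and, not_exists]
      constructor
      · rintro ⟨hv, h⟩
        exact ⟨hv, fun j hj => h j hj.2⟩
      · rintro ⟨hv, h⟩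
        refine ⟨hv, fun j hj => ?_⟩
        rcases lt_trichotomy i j with hij | hij | hij
        · exact h j ⟨hij, hj⟩
        · subst hij; exact absurd hj hv.ne
        · exact absurd hj (lt_trans (ha hij) hv).ne
    have hcard : (A i).card = (2*n - 1 - (a i : ℕ)) - (n - 1 - (i : ℕ)) := by
      rw [hAi, Finset.card_sdiff_of_subset (fun v hv => by
        obtain ⟨j, hj, rfl⟩ := Finset.mem_image.1 hv
        exact Finset.mem_Ioi.2 (ha (Finset.mem_Ioi.1 hj))),
        Finset.card_image_of_injective _ ha.injective, Fin.card_Ioi, Fin.card_Ioi]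
    rw [hcard]
    have h1 : (a i : ℕ) ≤ 2 * (i : ℕ) := ha2 i
    have h2 : (i : ℕ) < n := i.isLt
    omega
  · intro i j hij v hv
    rw [hmem] at hv ⊢
    exact ⟨lt_of_le_of_lt (ha.monotone hij) hv.1, hv.2⟩

private def phi (n : ℕ) :
    {p : (Fin n → Fin (2*n)) × (Fin n → Fin (2*n)) //
        (∀ i, p.1 i < p.2 i) ∧ StrictMono p.1 ∧
        Function.Bijective (Sum.elim p.1 p.2)} →
      {a : Fin n → Fin (2*n) // StrictMono a ∧ ∀ i : Fin n, (a i : ℕ) ≤ 2*(i:ℕ)} :=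
  fun p => ⟨p.1.1, p.2.2.1, fun i => a_le n p.1.1 p.1.2 p.2.1 p.2.2.1 p.2.2.2 i⟩

theorem stmt14 {R : Type*} [CommRing R] (n : ℕ) (x : Fin (2*n) → R) :
    ∑ᶠ p : {p : (Fin n → Fin (2*n)) × (Fin n → Fin (2*n)) //
        (∀ i, p.1 i < p.2 i) ∧ StrictMono p.1 ∧
        Function.Bijective (Sum.elim p.1 p.2)},
      ∏ i : Fin n, x (p.1.1 i)
    = ∑ᶠ a : {a : Fin n → Fin (2*n) // StrictMono a ∧ ∀ i : Fin n, (a i : ℕ) ≤ 2*(i:ℕ)},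
      ∏ i : Fin n, ((2*(i:ℕ) + 1 - (a.1 i : ℕ) : ℕ) : R) * x (a.1 i) := by
  classical
  rw [finsum_eq_sum_of_fintype, finsum_eq_sum_of_fintype]
  have hLHS : ∑ p : {p : (Fin n → Fin (2*n)) × (Fin n → Fin (2*n)) //
        (∀ i, p.1 i < p.2 i) ∧ StrictMono p.1 ∧
        Function.Bijective (Sum.elim p.1 p.2)},
      ∏ i : Fin n, x (p.1.1 i)
      = ∑ p, (fun q : {a : Fin n → Fin (2*n) // StrictMono a ∧
          ∀ i : Fin n, (a i : ℕ) ≤ 2*(i:ℕ)} => ∏ i : Fin n, x (q.1 i)) (phi n p) := rfl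
  rw [hLHS, Finset.sum_comp
    (fun q : {a : Fin n → Fin (2*n) // StrictMono a ∧ ∀ i : Fin n, (a i : ℕ) ≤ 2*(i:ℕ)} =>
      ∏ i : Fin n, x (q.1 i)) (phi n), Finset.sum_subset (Finset.subset_univ _) (fun q _ hq => by
    rw [Finset.card_eq_zero.2 (Finset.filter_eq_empty_iff.2 fun p _ h =>
      hq (Finset.mem_image.2 ⟨p, Finset.mem_univ p, h⟩)), zero_smul])]
  refine Finset.sum_congr rfl fun q _ => ?_
  have E : {p : {p : (Fin n → Fin (2*n)) × (Fin n → Fin (2*n)) //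
        (∀ i, p.1 i < p.2 i) ∧ StrictMono p.1 ∧
        Function.Bijective (Sum.elim p.1 p.2)} // phi n p = q} ≃
      {b : Fin n → Fin (2*n) // (∀ i, q.1 i < b i) ∧
        Function.Bijective (Sum.elim q.1 b)} :=
    { toFun := fun p => ⟨p.1.1.2, by
        have h : p.1.1.1 = q.1 := congrArg Subtype.val p.2
        refine ⟨?_, ?_⟩ <;> rw [← h]
        · exact p.1.2.1
        · exact p.1.2.2.2⟩
      invFun := fun b => ⟨⟨(q.1, b.1), ⟨b.2.1, q.2.1, b.2.2⟩⟩, Subtype.ext rfl⟩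
      left_inv := fun p => Subtype.ext (Subtype.ext
        (Prod.ext (congrArg Subtype.val p.2).symm rfl))
      right_inv := fun b => rfl }
  have hcard : #(Finset.univ.filter fun p => phi n p = q)
      = ∏ i : Fin n, (2*(i:ℕ)+1 - (q.1 i : ℕ)) := by
    rw [← Fintype.card_subtype, Fintype.card_congr E, fiber_card n q.1 q.2.1 q.2.2]
  rw [hcard, nsmul_eq_mul, Nat.cast_prod, Finset.prod_mul_distrib]
end

section
/- Let T = (x_{ij})_{1 ≤ i < j ≤ 2n} be an upper triangular array with constant rows x_{ij} = x_i. Then the Pfaffian Pf(T) = sum over perfect matching permutations (a,b) of sgn((a,b)) · x_{a(1)}···x_{a(n)} equals x_1 · x_3 · x_5 ··· x_{2n-1}. -/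
open Nat Finset Equiv

namespace Stmt15

variable {n : ℕ}

def ev (i : Fin n) : Fin (2*n) := ⟨2*(i:ℕ), by have := i.isLt; linarith⟩
def od (i : Fin n) : Fin (2*n) := ⟨2*(i:ℕ)+1, by have := i.isLt; linarith⟩

lemma ev_val (i : Fin n) : (ev i : ℕ) = 2*(i:ℕ) := rfl
lemma od_val (i : Fin n) : (od i : ℕ) = 2*(i:ℕ)+1 := rfl

def half (m : Fin (2*n)) : Fin n := ⟨(m:ℕ)/2, by have h := m.isLt; omega⟩

lemma half_val (m : Fin (2*n)) : (half m : ℕ) = (m:ℕ)/2 := rfl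

lemma pos_split (m : Fin (2*n)) : m = ev (half m) ∨ m = od (half m) := by
  rcases Nat.even_or_odd (m:ℕ) with h | h
  · rw [Nat.even_iff] at h
    left; apply Fin.ext; rw [ev_val, half_val]; omega
  · rw [Nat.odd_iff] at h
    right; apply Fin.ext; rw [od_val, half_val]; omega

def good (p : Perm (Fin (2*n))) : Prop :=
  (∀ i : Fin n, p (ev i) < p (od i)) ∧ (∀ i j : Fin n, i < j → p (ev i) < p (ev j))

lemma good_one : good (1 : Perm (Fin (2*n))) := by
  constructor
  · intro i
    rw [Perm.one_apply, Perm.one_apply, Fin.lt_def, ev_val, od_val]; omega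
  · intro i j hij
    rw [Perm.one_apply, Perm.one_apply, Fin.lt_def, ev_val, ev_val]
    have := Fin.lt_def.mp hij; omega

lemma good.mono {p : Perm (Fin (2*n))} (hp : good p) {i j : Fin n} (h : i ≤ j) :
    p (ev i) ≤ p (ev j) := by
  rcases lt_or_eq_of_le h with h | h
  · exact le_of_lt (hp.2 _ _ h)
  · subst h; rfl

-- upper bound: (p (ev i)).val ≤ 2*i
lemma val_ev_le {p : Perm (Fin (2*n))} (hp : good p) (i : Fin n) :
    ((p (ev i)) : ℕ) ≤ 2*(i:ℕ) := by
  have key : Finset.card (Finset.Ici (ev i)) ≤ Finset.card (Finset.Ici (p (ev i))) := by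
    apply Finset.card_le_card_of_injOn p
    · intro m hm
      simp only [Finset.mem_coe, Finset.mem_Ici] at hm ⊢
      have hle : i ≤ half m := by
        rw [Fin.le_def, ev_val] at hm
        rw [Fin.le_def, half_val]; omega
      rcases pos_split m with h | h <;> rw [h]
      · exact hp.mono hle
      · exact le_of_lt (lt_of_le_of_lt (hp.mono hle) (hp.1 _))
    · exact Set.injOn_of_injective p.injective
  rw [Fin.card_Ici, Fin.card_Ici] at key
  have h1 := (p (ev i)).isLt
  rw [ev_val] at key
  have h2 := i.isLt
  omega

lemma eq_one_of_adj {p : Perm (Fin (2*n))} (hp : good p)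
    (hadj : ∀ k : Fin n, ((p (od k)) : ℕ) = ((p (ev k)) : ℕ) + 1) : p = 1 := by
  have hev : ∀ i : Fin n, p (ev i) = ev i := by
    intro i
    have hub := val_ev_le hp i
    have hlb : 2*(i:ℕ) ≤ ((p (ev i)) : ℕ) := by
      have key : Finset.card (Finset.Iic (od i)) ≤ Finset.card (Finset.Iic (p (od i))) := by
        apply Finset.card_le_card_of_injOn p
        · intro m hm
          simp only [Finset.mem_coe, Finset.mem_Iic] at hm ⊢
          have hle : half m ≤ i := by
            rw [Fin.le_def, od_val] at hm
            rw [Fin.le_def, half_val]; omega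
          have hmono := Fin.le_def.mp (hp.mono hle)
          rcases pos_split m with h | h <;> rw [h] <;>
            rw [Fin.le_def, hadj i] <;> [skip; rw [hadj (half m)]]
          · omega
          · omega
        · exact Set.injOn_of_injective p.injective
      rw [Fin.card_Iic, Fin.card_Iic, od_val, hadj] at key
      omega
    apply Fin.ext; rw [ev_val]; omega
  apply Equiv.ext
  intro m
  rcases pos_split m with h | h <;> rw [h]
  · rw [hev, Perm.one_apply]
  · have := hadj (half m)
    rw [hev] at this
    rw [Perm.one_apply]
    apply Fin.ext
    rw [ev_val] at this
    rw [od_val]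
    omega


-- ############ part 2
def bad (p : Perm (Fin (2*n))) (k : ℕ) : Prop :=
  ∃ h : k < n, ((p (od ⟨k,h⟩)) : ℕ) ≠ ((p (ev ⟨k,h⟩)) : ℕ) + 1

noncomputable def gIdxN (p : Perm (Fin (2*n))) (h : ∃ k, bad p k) : ℕ :=
  @Nat.find (bad p) (Classical.decPred _) h

lemma bad_gIdxN (p : Perm (Fin (2*n))) (h : ∃ k, bad p k) : bad p (gIdxN p h) :=
  @Nat.find_spec (bad p) (Classical.decPred _) h

lemma gIdxN_lt (p : Perm (Fin (2*n))) (h : ∃ k, bad p k) : gIdxN p h < n :=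
  (bad_gIdxN p h).choose

noncomputable def gIdx (p : Perm (Fin (2*n))) (h : ∃ k, bad p k) : Fin n :=
  ⟨gIdxN p h, gIdxN_lt p h⟩

lemma gIdx_bad (p : Perm (Fin (2*n))) (h : ∃ k, bad p k) :
    ((p (od (gIdx p h))) : ℕ) ≠ ((p (ev (gIdx p h))) : ℕ) + 1 :=
  (bad_gIdxN p h).choose_spec

lemma gIdx_min (p : Perm (Fin (2*n))) (h : ∃ k, bad p k) (k : Fin n)
    (hk : (k:ℕ) < gIdxN p h) : ((p (od k)) : ℕ) = ((p (ev k)) : ℕ) + 1 := by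
  by_contra hc
  exact @Nat.find_min (bad p) (Classical.decPred _) h _ hk ⟨k.isLt, hc⟩

lemma gIdxN_eq (p : Perm (Fin (2*n))) (h : ∃ k, bad p k) (k : ℕ) (hbad : bad p k)
    (hmin : ∀ l, l < k → ¬ bad p l) : gIdxN p h = k := by
  exact (@Nat.find_eq_iff k (bad p) (Classical.decPred _) h).mpr ⟨hbad, hmin⟩

noncomputable def gC (p : Perm (Fin (2*n))) (hg : good p) (h : ∃ k, bad p k) : Fin (2*n) :=
  ⟨((p (ev (gIdx p h))) : ℕ) + 1, by
    have h1 := hg.1 (gIdx p h)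
    have h2 := gIdx_bad p h
    have h3 := (p (od (gIdx p h))).isLt
    rw [Fin.lt_def] at h1
    omega⟩

lemma gC_val (p : Perm (Fin (2*n))) (hg : good p) (h : ∃ k, bad p k) :
    (gC p hg h : ℕ) = ((p (ev (gIdx p h))) : ℕ) + 1 := rfl

noncomputable def gJ (p : Perm (Fin (2*n))) (hg : good p) (h : ∃ k, bad p k) : Fin n :=
  half (p⁻¹ (gC p hg h))

lemma key (p : Perm (Fin (2*n))) (hg : good p) (h : ∃ k, bad p k) :
    (gIdx p h : ℕ) < (gJ p hg h : ℕ) ∧ p (ev (gJ p hg h)) = gC p hg h := by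
  have hpm : p (p⁻¹ (gC p hg h)) = gC p hg h := Equiv.apply_symm_apply p _
  have hcval : (gC p hg h : ℕ) = ((p (ev (gIdx p h))) : ℕ) + 1 := rfl
  have hbad := gIdx_bad p h
  have hsplit : p⁻¹ (gC p hg h) = ev (gJ p hg h) ∨ p⁻¹ (gC p hg h) = od (gJ p hg h) :=
    pos_split _
  rcases lt_trichotomy ((gJ p hg h):ℕ) ((gIdx p h):ℕ) with hji | hji | hji
  · exfalso
    have hadj := gIdx_min p h (gJ p hg h) hji
    have hlt : p (ev (gJ p hg h)) < p (ev (gIdx p h)) :=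
      hg.2 _ _ (by rwa [Fin.lt_def])
    rw [Fin.lt_def] at hlt
    rcases hsplit with he | he <;> rw [he] at hpm <;>
      have hv := congrArg Fin.val hpm
    · rw [hcval] at hv; omega
    · rw [hcval] at hv; omega
  · exfalso
    have hij : gJ p hg h = gIdx p h := Fin.ext hji
    rcases hsplit with he | he <;> rw [he, hij] at hpm <;>
      have hv := congrArg Fin.val hpm <;> rw [hcval] at hv
    · omega
    · omega
  · rcases hsplit with he | he
    · refine ⟨hji, ?_⟩
      rw [he] at hpm; exact hpm
    · exfalso
      rw [he] at hpm
      have hv := congrArg Fin.val hpm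
      have h1 := hg.1 (gJ p hg h); rw [Fin.lt_def] at h1
      have h2 := hg.2 _ _ (show gIdx p h < gJ p hg h by rwa [Fin.lt_def])
      rw [Fin.lt_def] at h2
      rw [hcval] at hv; omega
noncomputable def g (p : Perm (Fin (2*n))) (hg : good p) (h : ∃ k, bad p k) :
    Perm (Fin (2*n)) :=
  Equiv.swap (p (od (gIdx p h))) (p (od (gJ p hg h))) * p

lemma ev_ne_od (k l : Fin n) : ev k ≠ od l := by
  intro hc; have := congrArg Fin.val hc; rw [ev_val, od_val] at this; omega

lemma od_injective : Function.Injective (od (n := n)) := by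
  intro k l hc; have := congrArg Fin.val hc; rw [od_val, od_val] at this
  exact Fin.ext (by omega)

lemma idx_ne_gJ (p : Perm (Fin (2*n))) (hg : good p) (h : ∃ k, bad p k) :
    gIdx p h ≠ gJ p hg h := by
  intro hc; have := congrArg Fin.val hc; have := (key p hg h).1; omega

lemma swap_ne (p : Perm (Fin (2*n))) (hg : good p) (h : ∃ k, bad p k) :
    p (od (gIdx p h)) ≠ p (od (gJ p hg h)) :=
  p.injective.ne (fun hc => idx_ne_gJ p hg h (od_injective hc))

lemma g_apply_ev (p : Perm (Fin (2*n))) (hg : good p) (h : ∃ k, bad p k) (k : Fin n) :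
    g p hg h (ev k) = p (ev k) := by
  rw [g, Perm.mul_apply]
  exact Equiv.swap_apply_of_ne_of_ne (p.injective.ne (ev_ne_od k _))
    (p.injective.ne (ev_ne_od k _))

lemma g_apply_od_i (p : Perm (Fin (2*n))) (hg : good p) (h : ∃ k, bad p k) :
    g p hg h (od (gIdx p h)) = p (od (gJ p hg h)) := by
  rw [g, Perm.mul_apply]; exact Equiv.swap_apply_left _ _

lemma g_apply_od_j (p : Perm (Fin (2*n))) (hg : good p) (h : ∃ k, bad p k) :
    g p hg h (od (gJ p hg h)) = p (od (gIdx p h)) := by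
  rw [g, Perm.mul_apply]; exact Equiv.swap_apply_right _ _

lemma g_apply_od_other (p : Perm (Fin (2*n))) (hg : good p) (h : ∃ k, bad p k)
    (k : Fin n) (h1 : k ≠ gIdx p h) (h2 : k ≠ gJ p hg h) :
    g p hg h (od k) = p (od k) := by
  rw [g, Perm.mul_apply]
  exact Equiv.swap_apply_of_ne_of_ne (p.injective.ne (fun hc => h1 (od_injective hc)))
    (p.injective.ne (fun hc => h2 (od_injective hc)))

lemma b_gt (p : Perm (Fin (2*n))) (hg : good p) (h : ∃ k, bad p k) :
    ((p (ev (gIdx p h))) : ℕ) + 1 < ((p (od (gIdx p h))) : ℕ) := by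
  have h1 := hg.1 (gIdx p h); rw [Fin.lt_def] at h1
  have h2 := gIdx_bad p h; omega

lemma d_gt (p : Perm (Fin (2*n))) (hg : good p) (h : ∃ k, bad p k) :
    ((p (ev (gIdx p h))) : ℕ) + 1 < ((p (od (gJ p hg h))) : ℕ) := by
  have h1 := hg.1 (gJ p hg h); rw [Fin.lt_def] at h1
  have h2 := congrArg Fin.val (key p hg h).2
  rw [gC_val] at h2; omega

lemma aJ_val (p : Perm (Fin (2*n))) (hg : good p) (h : ∃ k, bad p k) :
    ((p (ev (gJ p hg h))) : ℕ) = ((p (ev (gIdx p h))) : ℕ) + 1 := by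
  have h2 := congrArg Fin.val (key p hg h).2
  rw [gC_val] at h2; exact h2

lemma good_g (p : Perm (Fin (2*n))) (hg : good p) (h : ∃ k, bad p k) :
    good (g p hg h) := by
  constructor
  · intro k
    rw [g_apply_ev, Fin.lt_def]
    by_cases hk1 : k = gIdx p h
    · subst hk1
      rw [g_apply_od_i]
      have := d_gt p hg h; omega
    by_cases hk2 : k = gJ p hg h
    · subst hk2
      rw [g_apply_od_j]
      have := b_gt p hg h
      have := aJ_val p hg h; omega
    · rw [g_apply_od_other p hg h k hk1 hk2]
      exact Fin.lt_def.mp (hg.1 k)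
  · intro i j hij
    rw [g_apply_ev, g_apply_ev]
    exact hg.2 _ _ hij

lemma bad_g (p : Perm (Fin (2*n))) (hg : good p) (h : ∃ k, bad p k) :
    bad (g p hg h) (gIdxN p h) := by
  refine ⟨gIdxN_lt p h, ?_⟩
  show ((g p hg h (od (gIdx p h))) : ℕ) ≠ ((g p hg h (ev (gIdx p h))) : ℕ) + 1
  rw [g_apply_od_i, g_apply_ev]
  have := d_gt p hg h; omega

lemma gIdxN_g (p : Perm (Fin (2*n))) (hg : good p) (h : ∃ k, bad p k)
    (h2 : ∃ k, bad (g p hg h) k) : gIdxN (g p hg h) h2 = gIdxN p h := by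
  apply gIdxN_eq
  · exact bad_g p hg h
  · intro l hl hbad
    obtain ⟨hlt, hne⟩ := hbad
    have hIv : (gIdx p h : ℕ) = gIdxN p h := rfl
    have hk1 : (⟨l, hlt⟩ : Fin n) ≠ gIdx p h := by
      intro hc; have := congrArg Fin.val hc; simp at this; omega
    have hk2 : (⟨l, hlt⟩ : Fin n) ≠ gJ p hg h := by
      intro hc; have := congrArg Fin.val hc; simp at this
      have := (key p hg h).1; omega
    rw [show (od ⟨l, hlt⟩ : Fin (2*n)) = od ⟨l, hlt⟩ from rfl] at hne
    rw [g_apply_od_other p hg h ⟨l, hlt⟩ hk1 hk2, g_apply_ev] at hne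
    exact hne (gIdx_min p h ⟨l, hlt⟩ hl)

lemma gIdx_g (p : Perm (Fin (2*n))) (hg : good p) (h : ∃ k, bad p k)
    (h2 : ∃ k, bad (g p hg h) k) : gIdx (g p hg h) h2 = gIdx p h :=
  Fin.ext (gIdxN_g p hg h h2)

lemma gC_g (p : Perm (Fin (2*n))) (hg : good p) (h : ∃ k, bad p k)
    (hg2 : good (g p hg h)) (h2 : ∃ k, bad (g p hg h) k) :
    gC (g p hg h) hg2 h2 = gC p hg h := by
  apply Fin.ext
  rw [gC_val, gC_val, gIdx_g p hg h h2, g_apply_ev]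

lemma gJ_g (p : Perm (Fin (2*n))) (hg : good p) (h : ∃ k, bad p k)
    (hg2 : good (g p hg h)) (h2 : ∃ k, bad (g p hg h) k) :
    gJ (g p hg h) hg2 h2 = gJ p hg h := by
  have h3 : (g p hg h) (ev (gJ p hg h)) = gC p hg h := by
    rw [g_apply_ev]; exact (key p hg h).2
  have h4 : (g p hg h)⁻¹ (gC (g p hg h) hg2 h2) = ev (gJ p hg h) := by
    rw [gC_g p hg h hg2 h2, ← h3]; exact Equiv.symm_apply_apply _ _
  rw [gJ, h4]
  apply Fin.ext
  rw [half_val, ev_val]; omega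

lemma g_g (p : Perm (Fin (2*n))) (hg : good p) (h : ∃ k, bad p k)
    (hg2 : good (g p hg h)) (h2 : ∃ k, bad (g p hg h) k) :
    g (g p hg h) hg2 h2 = p := by
  have e1 : g (g p hg h) hg2 h2 =
      Equiv.swap ((g p hg h) (od (gIdx (g p hg h) h2)))
        ((g p hg h) (od (gJ (g p hg h) hg2 h2))) * (g p hg h) := rfl
  rw [e1, gIdx_g p hg h h2, gJ_g p hg h hg2 h2, g_apply_od_i, g_apply_od_j,
    Equiv.swap_comm]
  have e2 : g p hg h = Equiv.swap (p (od (gIdx p h))) (p (od (gJ p hg h))) * p := rfl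
  rw [e2, ← mul_assoc, Equiv.swap_mul_self, one_mul]

lemma sign_g (p : Perm (Fin (2*n))) (hg : good p) (h : ∃ k, bad p k) :
    Perm.sign (g p hg h) = - Perm.sign p := by
  rw [g, Perm.sign_mul, Perm.sign_swap (swap_ne p hg h), neg_one_mul]

lemma g_ne (p : Perm (Fin (2*n))) (hg : good p) (h : ∃ k, bad p k) :
    g p hg h ≠ p := by
  intro hc
  have h1 : g p hg h (od (gIdx p h)) = p (od (gIdx p h)) := by rw [hc]
  rw [g_apply_od_i] at h1
  exact idx_ne_gJ p hg h (od_injective (p.injective h1)).symm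

lemma ne_one_of_bad (p : Perm (Fin (2*n))) (h : ∃ k, bad p k) : p ≠ 1 := by
  rintro rfl
  obtain ⟨k, hlt, hne⟩ := h
  apply hne
  rw [Perm.one_apply, Perm.one_apply, od_val, ev_val]

lemma exists_bad_of_ne_one (p : Perm (Fin (2*n))) (hg : good p) (hne : p ≠ 1) :
    ∃ k, bad p k := by
  by_contra hc
  push_neg at hc
  apply hne
  apply eq_one_of_adj hg
  intro k
  by_contra hk
  exact hc (k : ℕ) ⟨k.isLt, hk⟩

end Stmt15

open Stmt15 Equiv

theorem main_s15 {R : Type*} [CommRing R] (n : ℕ) (x : Fin (2*n) → R) :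
    ∑ᶠ p : {p : Perm (Fin (2*n)) // good p},
      ((Perm.sign (p : Perm (Fin (2*n))) : ℤ) : R) *
        ∏ i : Fin n, x ((p : Perm (Fin (2*n))) (ev i))
    = ∏ i : Fin n, x (ev i) := by
  classical
  rw [finsum_eq_sum_of_fintype]
  have h1 : (⟨1, good_one⟩ : {p : Perm (Fin (2*n)) // good p}) ∈
      (Finset.univ : Finset {p : Perm (Fin (2*n)) // good p}) := Finset.mem_univ _
  rw [← Finset.sum_erase_add _ _ h1]
  have h2 : ∑ p ∈ Finset.univ.erase (⟨1, good_one⟩ : {p : Perm (Fin (2*n)) // good p}),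
      ((Perm.sign (p : Perm (Fin (2*n))) : ℤ) : R) *
        ∏ i : Fin n, x ((p : Perm (Fin (2*n))) (ev i)) = 0 := by
    have hbad : ∀ q : {p : Perm (Fin (2*n)) // good p},
        q ∈ Finset.univ.erase (⟨1, good_one⟩ : {p : Perm (Fin (2*n)) // good p}) →
        ∃ k, bad q.1 k := by
      intro q hq
      refine exists_bad_of_ne_one q.1 q.2 (fun hc => ?_)
      exact (Finset.mem_erase.mp hq).1 (Subtype.ext hc)
    apply Finset.sum_involution
      (g := fun q hq => ⟨g q.1 q.2 (hbad q hq), good_g q.1 q.2 (hbad q hq)⟩)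
    · intro q hq
      have hsign := sign_g q.1 q.2 (hbad q hq)
      have hprod : ∏ i : Fin n, x ((g q.1 q.2 (hbad q hq)) (ev i))
          = ∏ i : Fin n, x (q.1 (ev i)) := by
        apply Finset.prod_congr rfl
        intro i _
        rw [g_apply_ev]
      simp only [hsign, hprod]
      push_cast
      ring
    · intro q hq _
      intro hc
      exact g_ne q.1 q.2 (hbad q hq) (congrArg Subtype.val hc)
    · intro q hq
      apply Subtype.ext
      exact g_g q.1 q.2 (hbad q hq) _ _
    · intro q hq
      rw [Finset.mem_erase]
      refine ⟨fun hc => ?_, Finset.mem_univ _⟩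
      exact ne_one_of_bad _ ⟨gIdxN q.1 (hbad q hq), bad_g q.1 q.2 (hbad q hq)⟩
        (congrArg Subtype.val hc)
  rw [h2, zero_add]
  simp [Perm.one_apply]

theorem stmt15 {R : Type*} [CommRing R] (n : ℕ) (x : Fin (2*n) → R) :
    ∑ᶠ p : {p : Equiv.Perm (Fin (2*n)) //
        (∀ i : Fin n, p ⟨2*(i:ℕ), by have := i.isLt; omega⟩
            < p ⟨2*(i:ℕ)+1, by have := i.isLt; omega⟩) ∧
        (∀ i j : Fin n, i < j →
          p ⟨2*(i:ℕ), by have := i.isLt; omega⟩ < p ⟨2*(j:ℕ), by have := j.isLt; omega⟩)},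
      ((Equiv.Perm.sign (p : Equiv.Perm (Fin (2*n))) : ℤ) : R) *
        ∏ i : Fin n, x ((p : Equiv.Perm (Fin (2*n))) ⟨2*(i:ℕ), by have := i.isLt; omega⟩)
    = ∏ i : Fin n, x ⟨2*(i:ℕ), by have := i.isLt; omega⟩ := by
  exact main_s15 n x
end

section
/- For all nonnegative integers n and m, the sum over j from 0 to n of binomial(j+2m, j) * 2^j * binomial(2n-j, n-j) equals binomial(n+m, n) * 4^n. -/
open Nat Finset

private lemma key16 (j a : ℕ) :
    (j+a+1) * (j+2*a+2).choose (a+1)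
      = 2*(j+2*a+1) * (j+2*a).choose a + j * (j+2*a+1).choose (a+1) := by
  apply Nat.eq_of_mul_eq_mul_left (Nat.succ_pos a)
  have f1 : (j+2*a+2) * (j+2*a+1).choose a = (j+2*a+2).choose (a+1) * (a+1) := by
    have := Nat.add_one_mul_choose_eq (j+2*a+1) a
    simpa [Nat.succ_eq_add_one] using this
  have f2 : (j+2*a+1) * (j+2*a).choose a = (j+2*a+1).choose (a+1) * (a+1) := by
    have := Nat.add_one_mul_choose_eq (j+2*a) a
    simpa [Nat.succ_eq_add_one] using this
  have f3 : (j+2*a).choose a * (j+2*a+1) = (j+2*a+1).choose a * (j+a+1) := by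
    have := Nat.choose_mul_succ_eq (j+2*a) a
    have h : j+2*a+1-a = j+a+1 := by omega
    rwa [h] at this
  zify at f1 f2 f3 ⊢
  linear_combination (-((j:ℤ)+a+1))*f1 + (j:ℤ)*f2 + (-((j:ℤ)+2*a+2))*f3

private lemma perterm16 (n m j : ℕ) (h : j ≤ n) :
    (n+1) * ((j+2*m).choose j * 2^j * (2*(n+1)-j).choose (n+1-j))
      + (j+1) * ((j+1+2*m).choose (j+1) * 2^(j+1) * (2*n-j).choose (n-j))
    = 4*(n+m+1) * ((j+2*m).choose j * 2^j * (2*n-j).choose (n-j))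
      + j * ((j+2*m).choose j * 2^j * (2*n+1-j).choose (n+1-j)) := by
  obtain ⟨a, rfl⟩ := Nat.exists_eq_add_of_le h
  have e1 : 2*(j+a)-j = j+2*a := by omega
  have e2 : j+a-j = a := by omega
  have e3 : 2*(j+a+1)-j = j+2*a+2 := by omega
  have e4 : j+a+1-j = a+1 := by omega
  have e5 : 2*(j+a)+1-j = j+2*a+1 := by omega
  rw [e1, e2, e3, e4, e5]
  have hc : (j+1) * (j+1+2*m).choose (j+1) = (j+2*m+1) * (j+2*m).choose j := by
    have := Nat.add_one_mul_choose_eq (j+2*m) j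
    have h2 : j+1+2*m = j+2*m+1 := by omega
    rw [h2, this]; ring
  have hk := key16 j a
  zify at hk hc ⊢
  linear_combination ((2:ℤ)^j * ((j+2*m).choose j : ℤ)) * hk
    + ((2:ℤ)^j * 2 * (((j+2*a).choose a : ℤ))) * hc

theorem stmt16 (n m : ℕ) :
    ∑ j ∈ Finset.range (n+1), (j+2*m).choose j * 2^j * (2*n-j).choose (n-j)
      = (n+m).choose n * 4^n := by
  induction n with
  | zero => simp
  | succ n ih =>
    set g : ℕ → ℕ := fun j => j * ((j+2*m).choose j * 2^j * (2*n+1-j).choose (n+1-j)) with hg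
    have hsum : ∀ jj ∈ Finset.range (n+1),
        (n+1) * ((jj+2*m).choose jj * 2^jj * (2*(n+1)-jj).choose (n+1-jj)) + g (jj+1)
        = 4*(n+m+1) * ((jj+2*m).choose jj * 2^jj * (2*n-jj).choose (n-jj)) + g jj := by
      intro jj hj
      rw [Finset.mem_range] at hj
      have := perterm16 n m jj (by omega)
      simp only [hg]
      have e : 2*n+1-(jj+1) = 2*n-jj := by omega
      have e' : n+1-(jj+1) = n-jj := by omega
      rw [e, e']
      linarith [this]
    have H := Finset.sum_congr rfl hsum
    rw [Finset.sum_add_distrib, Finset.sum_add_distrib] at H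
    have tele : ∑ j ∈ Finset.range (n+1), g (j+1)
        = ∑ j ∈ Finset.range (n+1), g j + g (n+1) := by
      have h0 : g 0 = 0 := by simp [hg]
      have h1 := Finset.sum_range_succ' g (n+1)
      have h2 := Finset.sum_range_succ g (n+1)
      linarith [h0, h1, h2]
    rw [tele, ← Finset.mul_sum, ← Finset.mul_sum, ih] at H
    have Hfin : (n+1) * ∑ jj ∈ Finset.range (n+1),
          ((jj+2*m).choose jj * 2^jj * (2*(n+1)-jj).choose (n+1-jj)) + g (n+1)
        = 4*(n+m+1)*((n+m).choose n * 4^n) := by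
      linarith [H]
    have hgn : g (n+1) = (n+1) * ((n+1+2*m).choose (n+1) * 2^(n+1)) := by
      have e : 2*n+1-(n+1) = n := by omega
      have e' : n+1-(n+1) = 0 := by omega
      simp [hg, e, e']
    have hch : (n+1) * (n+1+m).choose (n+1) = (n+m+1) * (n+m).choose n := by
      have h := Nat.add_one_mul_choose_eq (n+m) n
      have e : n+1+m = n+m+1 := by omega
      rw [e]
      linarith [h]
    have hch4 : (n+1) * ((n+1+m).choose (n+1) * 4^(n+1))
        = 4*(n+m+1)*((n+m).choose n * 4^n) := by
      calc (n+1) * ((n+1+m).choose (n+1) * 4^(n+1))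
          = ((n+1) * (n+1+m).choose (n+1)) * 4^(n+1) := by ring
        _ = ((n+m+1) * (n+m).choose n) * 4^(n+1) := by rw [hch]
        _ = 4*(n+m+1)*((n+m).choose n * 4^n) := by rw [pow_succ]; ring
    apply Nat.eq_of_mul_eq_mul_left (Nat.succ_pos n)
    rw [Finset.sum_range_succ, Nat.mul_add]
    rw [show (2*(n+1)-(n+1)) = n+1 from by omega, show (n+1-(n+1)) = 0 from by omega,
      Nat.choose_zero_right, mul_one, hch4]
    linarith [Hfin, hgn]
end

section
/- For all nonnegative integers n and m, the sum over j from 0 to n of binomial(j+2m+1, j) * 2^(j+1) * binomial(2n-j, n-j) equals m! * (2n+2m+2)! / (n! * (2m+1)! * (n+m+1)!). -/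
open Nat Finset

private lemma perterm17 (j k m : ℕ) :
    (j+k+1) * ((j+2*m+1).choose j * 2^(j+1) * (j+2*k+2).choose (k+1))
      + (j+1) * ((j+2*m+2).choose (j+1) * 2^(j+2) * (j+2*k).choose k)
    = (4*(j+k)+4*m+6) * ((j+2*m+1).choose j * 2^(j+1) * (j+2*k).choose k)
      + j * ((j+2*m+1).choose j * 2^(j+1) * (j+2*k+1).choose (k+1)) := by
  apply Nat.eq_of_mul_eq_mul_left (show 0 < k+1 by omega)
  have h1 : (k+1) * (j+2*k+2).choose (k+1) = (j+2*k+2) * (j+2*k+1).choose k := by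
    rw [show j+2*k+2 = j+2*k+1+1 by omega, mul_comm]
    exact (Nat.add_one_mul_choose_eq (j+2*k+1) k).symm
  have h3 : (k+1) * (j+2*k+1).choose (k+1) = (j+2*k+1) * (j+2*k).choose k := by
    rw [mul_comm]
    exact (Nat.add_one_mul_choose_eq (j+2*k) k).symm
  have h2 : (j+k+1) * (j+2*k+1).choose k = (j+2*k+1) * (j+2*k).choose k := by
    have ha := Nat.choose_succ_right_eq (j+2*k+1) k
    rw [show j+2*k+1-k = j+k+1 by omega] at ha
    rw [mul_comm, ← ha, mul_comm]
    exact h3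
  have h4 : (j+1) * (j+2*m+2).choose (j+1) = (j+2*m+2) * (j+2*m+1).choose j := by
    rw [show j+2*m+2 = j+2*m+1+1 by omega, mul_comm]
    exact (Nat.add_one_mul_choose_eq (j+2*m+1) j).symm
  have ht : (2:ℕ)^(j+2) = 2^(j+1) * 2 := pow_succ 2 (j+1)
  zify at h1 h2 h3 h4 ht ⊢
  linear_combination (((j:ℤ)+k+1) * (j+2*m+1).choose j * 2^(j+1)) * h1
    + (((j:ℤ)+2*k+2) * (j+2*m+1).choose j * 2^(j+1)) * h2
    + (2 * ((k:ℤ)+1) * 2^(j+1) * (j+2*k).choose k) * h4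
    - ((j:ℤ) * (j+2*m+1).choose j * 2^(j+1)) * h3
    + (((j:ℤ)+1) * (j+2*m+2).choose (j+1) * (j+2*k).choose k) * ht

private def F17 (m N j : ℕ) : ℕ :=
  (j+2*m+1).choose j * 2^(j+1) * (2*N-j).choose (N-j)

private def H17 (m n j : ℕ) : ℕ :=
  j * ((j+2*m+1).choose j * 2^(j+1) * (2*n+1-j).choose (n+1-j))

private lemma key17 (n m : ℕ) :
    (n+1) * ∑ j ∈ Finset.range (n+2), F17 m (n+1) j
      = (4*n+4*m+6) * ∑ j ∈ Finset.range (n+1), F17 m n j := by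
  have step : ∀ j ∈ Finset.range (n+1),
      (n+1) * F17 m (n+1) j + H17 m n (j+1) = (4*n+4*m+6) * F17 m n j + H17 m n j := by
    intro j hj
    rw [Finset.mem_range, Nat.lt_succ_iff] at hj
    obtain ⟨k, rfl⟩ := Nat.exists_eq_add_of_le hj
    simp only [F17, H17]
    rw [show 2*(j+k+1)-j = j+2*k+2 by omega, show j+k+1-j = k+1 by omega,
        show 2*(j+k)+1-(j+1) = j+2*k by omega, show j+k+1-(j+1) = k by omega,
        show 2*(j+k)-j = j+2*k by omega, show j+k-j = k by omega,
        show 2*(j+k)+1-j = j+2*k+1 by omega, show j+1+2*m+1 = j+2*m+2 by omega,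
        show j+1+1 = j+2 by omega]
    exact perterm17 j k m
  have hsum : ∑ j ∈ Finset.range (n+1), ((n+1) * F17 m (n+1) j + H17 m n (j+1))
      = ∑ j ∈ Finset.range (n+1), ((4*n+4*m+6) * F17 m n j + H17 m n j) :=
    Finset.sum_congr rfl step
  rw [Finset.sum_add_distrib, Finset.sum_add_distrib] at hsum
  have h2 : ∑ j ∈ Finset.range (n+2), H17 m n j
      = ∑ j ∈ Finset.range (n+1), H17 m n (j+1) + H17 m n 0 :=
    Finset.sum_range_succ' (H17 m n) (n+1)
  have h3 : ∑ j ∈ Finset.range (n+2), H17 m n j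
      = ∑ j ∈ Finset.range (n+1), H17 m n j + H17 m n (n+1) :=
    Finset.sum_range_succ (H17 m n) (n+1)
  have h4 : ∑ j ∈ Finset.range (n+2), (n+1) * F17 m (n+1) j
      = ∑ j ∈ Finset.range (n+1), (n+1) * F17 m (n+1) j + (n+1) * F17 m (n+1) (n+1) :=
    Finset.sum_range_succ _ (n+1)
  have h0 : H17 m n 0 = 0 := by simp [H17]
  have h5 : H17 m n (n+1) = (n+1) * F17 m (n+1) (n+1) := by
    simp only [F17, H17]
    rw [show 2*n+1-(n+1) = n by omega, show n+1-(n+1) = 0 by omega,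
        show 2*(n+1)-(n+1) = n+1 by omega]
    simp
  rw [Finset.mul_sum, Finset.mul_sum]
  linarith

theorem stmt17 (n m : ℕ) :
    ∑ j ∈ Finset.range (n+1), (j+2*m+1).choose j * 2^(j+1) * (2*n-j).choose (n-j)
      = m ! * (2*n+2*m+2)! / (n ! * ((2*m+1)! * (n+m+1)!)) := by
  have cleared : ∀ N : ℕ,
      N ! * ((2*m+1)! * (N+m+1)!) * (∑ j ∈ Finset.range (N+1), F17 m N j)
        = m ! * (2*N+2*m+2)! := by
    intro N
    induction N with
    | zero =>
        rw [Finset.sum_range_one]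
        simp only [F17]
        norm_num
        rw [show 2*m+2 = (2*m+1)+1 by omega, Nat.factorial_succ (2*m+1),
            Nat.factorial_succ m]
        ring
    | succ n ih =>
        have hk := key17 n m
        calc (n+1)! * ((2*m+1)! * (n+1+m+1)!) * ∑ j ∈ Finset.range (n+1+1), F17 m (n+1) j
            = (n+m+2) * (n ! * ((2*m+1)! * (n+m+1)!)) *
              ((n+1) * ∑ j ∈ Finset.range (n+2), F17 m (n+1) j) := by
              rw [Nat.factorial_succ n, show n+1+m+1 = (n+m+1)+1 by omega,
                  Nat.factorial_succ (n+m+1)]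
              ring
          _ = (n+m+2) * (n ! * ((2*m+1)! * (n+m+1)!)) *
              ((4*n+4*m+6) * ∑ j ∈ Finset.range (n+1), F17 m n j) := by rw [hk]
          _ = (n+m+2) * (4*n+4*m+6) *
              (n ! * ((2*m+1)! * (n+m+1)!) * ∑ j ∈ Finset.range (n+1), F17 m n j) := by ring
          _ = (n+m+2) * (4*n+4*m+6) * (m ! * (2*n+2*m+2)!) := by rw [ih]
          _ = m ! * (2*(n+1)+2*m+2)! := by
              rw [show 2*(n+1)+2*m+2 = (2*n+2*m+2)+1+1 by omega,
                  Nat.factorial_succ (2*n+2*m+2+1), Nat.factorial_succ (2*n+2*m+2)]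
              ring
  have hc := cleared n
  simp only [F17] at hc
  rw [← hc, Nat.mul_div_cancel_left]
  positivity
end

section
/- For all nonnegative integers m and n, the integer n! * (2m)! * (n+m)! divides m! * (2m+2n)!; equivalently, m!(2m+2n)!/((2m)! n! (m+n)!) is a nonnegative integer. -/
open Nat

lemma key_div (q m n : ℕ) (hq : 0 < q) :
    n / q + (2*m / q + (n+m) / q) ≤ m / q + (2*m+2*n) / q := by
  obtain ⟨a, r, hr, rfl⟩ : ∃ a r, r < q ∧ m = q * a + r :=
    ⟨m / q, m % q, Nat.mod_lt _ hq, (Nat.div_add_mod m q).symm⟩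
  obtain ⟨b, s, hs, rfl⟩ : ∃ b s, s < q ∧ n = q * b + s :=
    ⟨n / q, n % q, Nat.mod_lt _ hq, (Nat.div_add_mod n q).symm⟩
  have e1 : (q*a+r) / q = a + r / q := by rw [Nat.mul_add_div hq]
  have e2 : (q*b+s) / q = b + s / q := by rw [Nat.mul_add_div hq]
  have e3 : 2*(q*a+r) / q = 2*a + 2*r / q := by
    rw [show 2*(q*a+r) = q*(2*a) + 2*r by ring, Nat.mul_add_div hq]
  have e4 : (q*b+s + (q*a+r)) / q = (a+b) + (r+s) / q := by
    rw [show q*b+s + (q*a+r) = q*(a+b) + (r+s) by ring, Nat.mul_add_div hq]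
  have e5 : (2*(q*a+r)+2*(q*b+s)) / q = 2*(a+b) + (2*r+2*s) / q := by
    rw [show 2*(q*a+r)+2*(q*b+s) = q*(2*(a+b)) + (2*r+2*s) by ring, Nat.mul_add_div hq]
  rw [e1, e2, e3, e4, e5]
  have hr0 : r / q = 0 := Nat.div_eq_of_lt hr
  have hs0 : s / q = 0 := Nat.div_eq_of_lt hs
  have h2r : 2*r/q ≤ 1 := by
    rw [Nat.div_le_iff_le_mul_add_pred hq]; omega
  have hrs : (r+s)/q ≤ 1 := by
    rw [Nat.div_le_iff_le_mul_add_pred hq]; omega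
  have key : 2*r/q + (r+s)/q ≤ (2*r+2*s)/q := by
    interval_cases h1 : 2*r/q <;> interval_cases h2 : (r+s)/q <;> simp_all
    · -- 0,1 : need 1 ≤ (2r+2s)/q, have q ≤ r+s
      have : q ≤ r + s := (Nat.one_le_div_iff hq).mp (le_of_eq h2.symm)
      exact (Nat.one_le_div_iff hq).mpr (by omega)
    · have : q ≤ 2*r := (Nat.one_le_div_iff hq).mp (le_of_eq h1.symm)
      exact (Nat.one_le_div_iff hq).mpr (by omega)
    · have h1' : q ≤ 2*r := (Nat.one_le_div_iff hq).mp (le_of_eq h1.symm)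
      have h2' : q ≤ r + s := (Nat.one_le_div_iff hq).mp (le_of_eq h2.symm)
      exact Nat.le_div_iff_mul_le hq |>.mpr (by omega)
  omega
theorem stmt18 (m n : ℕ) :
    (n ! * ((2*m)! * (n+m)!)) ∣ (m ! * (2*m+2*n)!) := by
  have hL : n ! * ((2*m)! * (n+m)!) ≠ 0 :=
    Nat.mul_ne_zero (factorial_ne_zero _) (Nat.mul_ne_zero (factorial_ne_zero _) (factorial_ne_zero _))
  have hR : m ! * (2*m+2*n)! ≠ 0 := Nat.mul_ne_zero (factorial_ne_zero _) (factorial_ne_zero _)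
  rw [← Nat.factorization_le_iff_dvd hL hR]
  intro p
  by_cases hp : p.Prime
  · haveI : Fact p.Prime := ⟨hp⟩
    have hfac : ∀ k : ℕ, (k !).factorization p = padicValNat p (k !) :=
      fun k => Nat.factorization_def _ hp
    rw [Nat.factorization_mul (factorial_ne_zero _) (Nat.mul_ne_zero (factorial_ne_zero _) (factorial_ne_zero _)),
        Nat.factorization_mul (factorial_ne_zero _) (factorial_ne_zero _),
        Nat.factorization_mul (factorial_ne_zero _) (factorial_ne_zero _)]
    simp only [Finsupp.coe_add, Pi.add_apply, hfac]
    set b := Nat.log p (2*m+2*n) + 1 with hb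
    have hlog : ∀ k : ℕ, k ≤ 2*m+2*n → Nat.log p k < b :=
      fun k hk => Nat.lt_succ_of_le (Nat.log_mono_right hk)
    rw [padicValNat_factorial (hlog n (by omega)),
        padicValNat_factorial (hlog (2*m) (by omega)),
        padicValNat_factorial (hlog (n+m) (by omega)),
        padicValNat_factorial (hlog m (by omega)),
        padicValNat_factorial (hlog (2*m+2*n) le_rfl)]
    rw [← Finset.sum_add_distrib, ← Finset.sum_add_distrib, ← Finset.sum_add_distrib]
    apply Finset.sum_le_sum
    intro i _
    exact key_div (p ^ i) m n (pow_pos hp.pos i)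
  · simp [Nat.factorization_eq_zero_of_not_prime _ hp]
end
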